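/- Suppose b > 0, α > 0, β₁k₁ > b + α, α + b ≤ 1, and β₁k₁ ≤ 1 + b. Set A = b(β₁k₁−b−α)/(β₁(b+α)) and x* = (b+α)/(β₁k₁). Then every complex eigenvalue μ of the 4×4 real matrix J = [[1−b−β₁A, −β₁k₁x*, 0, −β₁k₂x*], [β₁A, 1−b−α+β₁k₁x*, 0, β₁k₂x*], [0, α, 1−b, 0], [0, 0, 0, 1−b]] satisfies |μ| < 1. -/

import Mathlib

open Matrix in
lemma my_det_fin_four {R : Type*} [CommRing R] (M : Matrix (Fin 4) (Fin 4) R) :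
    M.det =
      M 0 0 * M 1 1 * M 2 2 * M 3 3 - M 0 0 * M 1 1 * M 2 3 * M 3 2 -
      M 0 0 * M 1 2 * M 2 1 * M 3 3 + M 0 0 * M 1 2 * M 2 3 * M 3 1 +
      M 0 0 * M 1 3 * M 2 1 * M 3 2 - M 0 0 * M 1 3 * M 2 2 * M 3 1 -
      M 0 1 * M 1 0 * M 2 2 * M 3 3 + M 0 1 * M 1 0 * M 2 3 * M 3 2 +
      M 0 1 * M 1 2 * M 2 0 * M 3 3 - M 0 1 * M 1 2 * M 2 3 * M 3 0 -
      M 0 1 * M 1 3 * M 2 0 * M 3 2 + M 0 1 * M 1 3 * M 2 2 * M 3 0 +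
      M 0 2 * M 1 0 * M 2 1 * M 3 3 - M 0 2 * M 1 0 * M 2 3 * M 3 1 -
      M 0 2 * M 1 1 * M 2 0 * M 3 3 + M 0 2 * M 1 1 * M 2 3 * M 3 0 +
      M 0 2 * M 1 3 * M 2 0 * M 3 1 - M 0 2 * M 1 3 * M 2 1 * M 3 0 -
      M 0 3 * M 1 0 * M 2 1 * M 3 2 + M 0 3 * M 1 0 * M 2 2 * M 3 1 +
      M 0 3 * M 1 1 * M 2 0 * M 3 2 - M 0 3 * M 1 1 * M 2 2 * M 3 0 -
      M 0 3 * M 1 2 * M 2 0 * M 3 1 + M 0 3 * M 1 2 * M 2 1 * M 3 0 := by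
  simp (config := { decide := true }) [Matrix.det_succ_row_zero, Fin.sum_univ_succ,
    Fin.succAbove, Matrix.submatrix_apply,
    show ((2:Fin 3).succ : Fin 4) = 3 from rfl, show ((2:Fin 3).castSucc : Fin 4) = 2 from rfl]
  ring

lemma quad_root_abs_lt (T D : ℝ) (μ : ℂ)
    (hroot : μ ^ 2 - (T : ℂ) * μ + (D : ℂ) = 0)
    (hp1 : 0 < 1 - T + D) (hm1 : 0 < 1 + T + D) (hD : D < 1) :
    ‖μ‖ < 1 := by
  set x := μ.re
  set y := μ.im
  have hre : x ^ 2 - y ^ 2 - T * x + D = 0 := by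
    have := congrArg Complex.re hroot
    simpa [pow_two, Complex.mul_re, Complex.mul_im, x, y] using this
  have him : y * (2 * x - T) = 0 := by
    have := congrArg Complex.im hroot
    simp [pow_two, Complex.mul_re, Complex.mul_im, x, y] at this
    ring_nf
    ring_nf at this
    linarith
  have hnorm : x ^ 2 + y ^ 2 < 1 := by
    rcases mul_eq_zero.mp him with hy | hx
    · have hx2 : x ^ 2 - T * x + D = 0 := by rw [hy] at hre; linarith [hre]
      have e1 : (1 - x) * ((1 - T) + x) = 1 - T + D := by linear_combination -hx2
      have e2 : (1 + x) * ((1 + T) - x) = 1 + T + D := by linear_combination -hx2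
      have hxlt : x ^ 2 < 1 := by
        rcases le_or_gt 1 x with hx | hx
        · exfalso
          have h5 : 1 + x < T := by nlinarith [e1, hp1]
          nlinarith [hx2, hD]
        rcases le_or_gt x (-1) with hx' | hx'
        · exfalso
          have h5 : T < x - 1 := by nlinarith [e2, hm1]
          nlinarith [hx2, hD]
        · nlinarith
      rw [hy]; simpa using hxlt
    · have hT : T = 2 * x := by linarith
      rw [hT] at hre
      nlinarith [hre]
  have habs : ‖μ‖ ^ 2 = x ^ 2 + y ^ 2 := by
    rw [Complex.sq_norm, Complex.normSq_apply]; ring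
  nlinarith [norm_nonneg μ, habs]

theorem jacobian_eigenvalues_in_unit_disc (b α β₁ k₁ k₂ A xs : ℝ)
    (hb : 0 < b) (hα : 0 < α)
    (hβ₁ : 0 ≤ β₁) (hk₁ : 0 ≤ k₁) (hk₂ : 0 ≤ k₂)
    (hgt : β₁ * k₁ > b + α) (h1 : α + b ≤ 1) (h2 : β₁ * k₁ ≤ 1 + b)
    (hA : A = b * (β₁ * k₁ - b - α) / (β₁ * (b + α)))
    (hxs : xs = (b + α) / (β₁ * k₁)) :
    ∀ μ : ℂ,
      (Matrix.charpoly
        ((!![1 - b - β₁ * A, -(β₁ * k₁ * xs), 0, -(β₁ * k₂ * xs);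
             β₁ * A, 1 - b - α + β₁ * k₁ * xs, 0, β₁ * k₂ * xs;
             0, α, 1 - b, 0;
             0, 0, 0, 1 - b] : Matrix (Fin 4) (Fin 4) ℝ).map
          (fun r => (r : ℂ)))).IsRoot μ →
      ‖μ‖ < 1 := by
  intro μ hμ
  have hbpα : 0 < b + α := by linarith
  have hR : 0 < β₁ * k₁ := lt_trans hbpα hgt
  have hβpos : 0 < β₁ := by
    rcases lt_or_eq_of_le hβ₁ with h | h
    · exact h
    · exfalso; rw [← h] at hR; simp at hR
  have hRne : β₁ * k₁ ≠ 0 := ne_of_gt hR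
  have hs : β₁ * k₁ * xs = b + α := by
    rw [hxs]; field_simp; exact div_self (right_ne_zero_of_mul hRne)
  set a := b * (β₁ * k₁ - b - α) / (b + α) with ha_def
  have ha : β₁ * A = a := by
    rw [hA, ha_def]
    field_simp
  have hapos : 0 < a := div_pos (mul_pos hb (by linarith)) hbpα
  have ha' : a * (b + α) = b * (β₁ * k₁ - b - α) := by
    rw [ha_def]; field_simp
  have ha1 : a < 1 := by nlinarith [ha', mul_pos hb hα]
  have hb1 : b < 1 := by linarith
  rw [ha, hs] at hμ
  have h0 : Polynomial.eval μ (Matrix.charpoly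
      ((!![1 - b - a, -(b + α), 0, -(β₁ * k₂ * xs);
           a, 1 - b - α + (b + α), 0, β₁ * k₂ * xs;
           0, α, 1 - b, 0;
           0, 0, 0, 1 - b] : Matrix (Fin 4) (Fin 4) ℝ).map
        (fun r => (r : ℂ)))) = 0 := hμ
  rw [Matrix.charpoly, my_det_fin_four] at h0
  simp [Matrix.charmatrix_apply, Matrix.diagonal, Matrix.map_apply, Matrix.vecHead, Matrix.vecTail] at h0
  have hfact : (μ - ((1 : ℂ) - (b : ℂ))) ^ 2 *
      (μ ^ 2 - ((2 - b - a : ℝ) : ℂ) * μ + ((1 - b - a + (b + α) * a : ℝ) : ℂ)) = 0 := by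
    push_cast at h0 ⊢
    linear_combination h0
  rcases mul_eq_zero.mp hfact with h | h
  · have hμ1 : μ = ((1 - b : ℝ) : ℂ) := by
      have := pow_eq_zero_iff (n := 2) (by norm_num) |>.mp h
      push_cast
      linear_combination this
    rw [hμ1, Complex.norm_real, Real.norm_eq_abs]
    rw [abs_lt]; constructor <;> linarith
  · apply quad_root_abs_lt (2 - b - a) (1 - b - a + (b + α) * a) μ h
    · nlinarith [mul_pos hbpα hapos]
    · nlinarith [mul_pos hbpα hapos]
    · nlinarith [mul_pos hapos hbpα]
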